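/- arXiv:2310.12529 — 2 statements merged into one kernel-verified Lean document; each statement's English description precedes it below -/
import Mathlib

section
/- Let (M, g, f) be a steady gradient Ricci soliton with Ric = Hess f such that the scalar curvature R is uniformly bounded on M and ⟨∇R, ∇f⟩ = −2Ric(∇f,∇f). Suppose on a set Ω one has Ric ≥ c' g and c'^{-1} ≤ |∇f| ≤ c' for some c' > 0. Then no forward trajectory of the flow φ_t of −∇f can remain in Ω for all t ≥ 0. -/
/-- Let `(M, g, f)` be a steady gradient Ricci soliton with `Ric = Hess f`,
uniformly bounded scalar curvature `R`, and `⟨∇R, ∇f⟩ = −2 Ric(∇f, ∇f)`, so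
that `d/dt R(φ_t(q)) = 2 Ric(∇f, ∇f)(φ_t(q))` along the flow `φ_t` of `−∇f`.
Suppose on a set `Ω` one has `Ric ≥ c'·g` and `c'⁻¹ ≤ |∇f| ≤ c'` for some
`c' > 0`.  Then no forward trajectory of `φ_t` can remain in `Ω` for all
`t ≥ 0`.  Here `Ric2 t = Ric(∇f, ∇f)(φ_t(q))` and `nf t = |∇f|(φ_t(q))`. -/
theorem no_trajectory_stays_in_region
    {M : Type*} (R f : M → ℝ) (φ : ℝ → M → M) (Ω : Set M) (q : M)
    (Ric2 nf : ℝ → ℝ) (c' B : ℝ) (hc' : 0 < c')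
    -- R is uniformly bounded on M
    (hbound : ∀ x : M, R x ≤ B)
    -- d/dt R(φ_t(q)) = 2 Ric(∇f, ∇f)(φ_t(q))
    (hderiv : ∀ t, 0 ≤ t → HasDerivAt (fun t => R (φ t q)) (2 * Ric2 t) t)
    -- Ric ≥ c' g on Ω, evaluated on ∇f: Ric(∇f,∇f) ≥ c'·|∇f|²
    (hRicLower : ∀ t, 0 ≤ t → φ t q ∈ Ω → c' * (nf t) ^ 2 ≤ Ric2 t)
    -- c'⁻¹ ≤ |∇f| ≤ c' on Ω
    (hnf : ∀ t, 0 ≤ t → φ t q ∈ Ω → c'⁻¹ ≤ nf t ∧ nf t ≤ c') :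
    ¬ (∀ t, 0 ≤ t → φ t q ∈ Ω) := by
  intro h
  set g : ℝ → ℝ := fun t => R (φ t q) with hg
  -- lower bound on the derivative: 2 * Ric2 t ≥ 2 / c' for t ≥ 0
  have key : ∀ t : ℝ, 0 ≤ t → 2 / c' ≤ 2 * Ric2 t := by
    intro t ht
    have hΩ := h t ht
    have h1 := hRicLower t ht hΩ
    have h2 := (hnf t ht hΩ).1
    have hinv : (0:ℝ) < c'⁻¹ := by positivity
    have : c'⁻¹ ^ 2 ≤ (nf t) ^ 2 := by
      apply pow_le_pow_left₀ (le_of_lt hinv) h2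
    have h3 : c' * c'⁻¹ ^ 2 ≤ c' * (nf t) ^ 2 := by nlinarith
    have h4 : c' * c'⁻¹ ^ 2 = c'⁻¹ := by field_simp
    have h5 : 2 / c' = 2 * c'⁻¹ := by rw [div_eq_mul_inv]
    nlinarith
  -- auxiliary function F t = g t - (2/c') * t is monotone on [0, ∞)
  have hF : MonotoneOn (fun t => g t - (2 / c') * t) (Set.Ici 0) := by
    apply monotoneOn_of_hasDerivWithinAt_nonneg (f' := fun t => 2 * Ric2 t - 2 / c')
      (convex_Ici 0)
    · intro t ht
      exact ((hderiv t ht).sub ((hasDerivAt_id t).const_mul (2 / c'))).continuousAt.continuousWithinAt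
    · intro t ht
      have ht' : (0:ℝ) ≤ t := le_of_lt (by simpa using ht)
      have := (hderiv t ht').sub (((hasDerivAt_id t).const_mul (2 / c')))
      simpa [mul_comm, Pi.sub_def] using this.hasDerivWithinAt
    · intro t ht
      have ht' : (0:ℝ) ≤ t := le_of_lt (by simpa using ht)
      linarith [key t ht']
  -- pick T large
  have hg0B : g 0 ≤ B := hbound _
  set T : ℝ := c' * (B - g 0 + 1) / 2 with hT
  have hTpos : 0 < T := by
    have : 0 < B - g 0 + 1 := by linarith
    positivity
  have := hF (Set.self_mem_Ici) (Set.mem_Ici.mpr hTpos.le) hTpos.le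
  simp only [mul_zero, sub_zero] at this
  have hgT : g 0 + (2 / c') * T ≤ g T := by linarith
  have hTval : (2 / c') * T = B - g 0 + 1 := by
    rw [hT]; field_simp
  have : g T ≤ B := hbound _
  linarith
end

section
/- Let (M, g, f) be a steady gradient Ricci soliton with Ric = Hess f and Ric ≥ 0 along the relevant geodesics, normalized so that R + |∇f|² = 1 and R → 0 at infinity. Let Γ be a unit-speed integral curve of ∇f/|∇f| with Γ(0) = p. Then for every ε > 0 there is C > 0 such that (1 − ε)s ≤ d(Γ(s), p) ≤ s for all s > C. -/
open Filter Topology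

/-- Let `(M, g, f)` be a steady gradient Ricci soliton with `Ric = Hess f`,
`Ric ≥ 0` along the relevant geodesics, normalized so that `R + |∇f|² = 1`
with `R → 0` at infinity (hence `|∇f| → 1` along the curve).  Let `Γ` be a
unit-speed integral curve of `∇f/|∇f|` with `Γ(0) = p`.  Then for every
`ε > 0` there is `C > 0` such that `(1 − ε)·s ≤ d(Γ(s), p) ≤ s` for all
`s > C`.  Here `u(s) = |∇f|(Γ(s))` is the derivative of `f ∘ Γ`. -/
theorem integral_curve_asymptotic_distance
    {M : Type*} [MetricSpace M]
    (f : M → ℝ) (Γ : ℝ → M) (p : M) (hp : Γ 0 = p) (u : ℝ → ℝ)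
    -- Γ has unit speed, hence is 1-Lipschitz
    (hLip : ∀ s₁ s₂ : ℝ, dist (Γ s₁) (Γ s₂) ≤ |s₂ - s₁|)
    -- d/ds f(Γ(s)) = |∇f|(Γ(s)) = u(s), with 0 ≤ u ≤ 1 (since R + |∇f|² = 1)
    (hderiv : ∀ s, 0 ≤ s → HasDerivAt (fun s => f (Γ s)) (u s) s)
    (hu0 : ∀ s, 0 ≤ s → 0 ≤ u s) (hu1 : ∀ s, 0 ≤ s → u s ≤ 1)
    -- |∇f| → 1 along Γ (since R → 0 at infinity)
    (htend : Tendsto u atTop (𝓝 1))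
    -- convexity of f along minimal geodesics (Ric ≥ 0, |∇f| ≤ 1):
    (hconv : ∀ x y : M, f y - f x ≤ dist x y) :
    ∀ ε : ℝ, 0 < ε → ∃ C : ℝ, 0 < C ∧ ∀ s : ℝ, C < s →
      (1 - ε) * s ≤ dist (Γ s) p ∧ dist (Γ s) p ≤ s := by
  intro ε hε
  -- pick C₀ ≥ 1 beyond which u ≥ 1 - ε/2
  have hev : ∀ᶠ s in atTop, 1 - ε / 2 ≤ u s :=
    htend.eventually (eventually_ge_nhds (by linarith))
  obtain ⟨N, hN⟩ := hev.exists_forall_of_atTop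
  set C₀ : ℝ := max N 1 with hC₀def
  have hC₀1 : (1 : ℝ) ≤ C₀ := le_max_right _ _
  have hC₀pos : (0 : ℝ) < C₀ := lt_of_lt_of_le one_pos hC₀1
  have hC₀N : N ≤ C₀ := le_max_left _ _
  set c : ℝ := 1 - ε / 2 with hc
  -- monotonicity of g s = f (Γ s) - c * s on [C₀, ∞)
  have hg : ∀ x ∈ Set.Ici C₀, HasDerivAt (fun s => f (Γ s) - c * s) (u x - c) x := by
    intro x hx
    have hx0 : (0 : ℝ) ≤ x := le_trans hC₀pos.le hx
    simpa using (hderiv x hx0).fun_sub ((hasDerivAt_id x).const_mul c)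
  have hmono : MonotoneOn (fun s => f (Γ s) - c * s) (Set.Ici C₀) := by
    apply monotoneOn_of_deriv_nonneg (convex_Ici C₀)
    · exact fun x hx => ((hg x hx).continuousAt).continuousWithinAt
    · intro x hx
      rw [interior_Ici] at hx
      exact ((hg x (Set.mem_Ici.mpr (le_of_lt hx))).differentiableAt).differentiableWithinAt
    · intro x hx
      rw [interior_Ici] at hx
      rw [(hg x (Set.mem_Ici.mpr hx.le)).deriv]
      have := hN x (le_trans hC₀N hx.le)
      linarith
  refine ⟨max (4 * C₀ / ε) C₀, lt_of_lt_of_le hC₀pos (le_max_right _ _), ?_⟩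
  intro s hs
  have hsC₀ : C₀ < s := lt_of_le_of_lt (le_max_right _ _) hs
  have hs4 : 4 * C₀ / ε < s := lt_of_le_of_lt (le_max_left _ _) hs
  have hspos : 0 < s := lt_trans hC₀pos hsC₀
  constructor
  · -- lower bound
    have h1 : f (Γ s) - c * s ≥ f (Γ C₀) - c * C₀ := by
      have := hmono (Set.self_mem_Ici) (Set.mem_Ici.mpr hsC₀.le) hsC₀.le
      simpa using this
    have h2 : f (Γ s) - f p ≤ dist (Γ s) p := by
      have := hconv p (Γ s)
      rwa [dist_comm] at this
    have h3 : f p - f (Γ C₀) ≤ C₀ := by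
      have h := hconv (Γ C₀) (Γ 0)
      have hd : dist (Γ C₀) (Γ 0) ≤ C₀ := by
        have := hLip C₀ 0
        rwa [zero_sub, abs_neg, abs_of_pos hC₀pos] at this
      rw [hp] at h hd
      linarith
    -- f (Γ s) - f p ≥ c * (s - C₀) - C₀
    have hkey : c * s - c * C₀ - C₀ ≤ dist (Γ s) p := by linarith
    -- (1-ε) s ≤ c s - c C₀ - C₀ since (ε/2) s ≥ 2 C₀
    have h4 : 4 * C₀ ≤ ε * s := by
      rw [div_lt_iff₀ hε] at hs4
      linarith [mul_comm s ε]
    rw [hc] at hkey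
    nlinarith
  · -- upper bound
    have := hLip s 0
    rw [hp] at this
    calc dist (Γ s) p ≤ |0 - s| := this
      _ = s := by rw [zero_sub, abs_neg, abs_of_pos hspos]
end
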